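/- Let Λ be an artin algebra and f, g : A → B morphisms of finitely generated Λ-modules, with B having no nonzero injective direct summands. Then Mimo(f) ≅ Mimo(g) in S(Λ) if and only if there exist automorphisms a of A and b of B such that f ∘ b − a ∘ g (compositions written left to right: a followed by g, f followed by b) factors through an injective Λ-module. -/

import Mathlib

universe u

/-- A linear map factors through an injective `Λ`-module. -/
def FactorsThroughInjective (Λ : Type u) [Ring Λ] {A B : Type u}
    [AddCommGroup A] [Module Λ A] [AddCommGroup B] [Module Λ B]
    (h : A →ₗ[Λ] B) : Prop :=
  ∃ (I : Type u) (_ : AddCommGroup I) (_ : Module Λ I),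
    Module.Injective Λ I ∧ ∃ (p : A →ₗ[Λ] I) (q : I →ₗ[Λ] B), h = q ∘ₗ p

/-- `e : M →ₗ[Λ] I` is an injective envelope: `I` is injective, `e` is injective,
and the image of `e` is an essential submodule of `I`. -/
def IsInjectiveEnvelope (Λ : Type u) [Ring Λ] {M I : Type u}
    [AddCommGroup M] [Module Λ M] [AddCommGroup I] [Module Λ I]
    (e : M →ₗ[Λ] I) : Prop :=
  Module.Injective Λ I ∧ Function.Injective e ∧
    ∀ N : Submodule Λ I, N ≠ ⊥ → N ⊓ LinearMap.range e ≠ ⊥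

section Hopkins

variable {k : Type u} [CommRing k] [IsArtinianRing k]

omit [IsArtinianRing k] in
lemma aux_semisimple_of_torsion {I : Ideal k} [IsSemisimpleRing (k ⧸ I)]
    {T : Type u} [AddCommGroup T] [Module k T]
    (hT : Module.IsTorsionBySet k T I) : IsSemisimpleModule k T := by
  letI : Module (k ⧸ I) T := hT.module
  haveI : IsScalarTower k (k ⧸ I) T := hT.isScalarTower
  let e : Submodule (k ⧸ I) T ≃o Submodule k T :=
    { toFun := Submodule.restrictScalars k
      invFun := fun S =>
        { carrier := S
          add_mem' := fun h1 h2 => S.add_mem h1 h2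
          zero_mem' := S.zero_mem
          smul_mem' := by
            intro c x hx
            obtain ⟨r, rfl⟩ := Ideal.Quotient.mk_surjective c
            have hrx : (Ideal.Quotient.mk I r) • x = r • x := hT.mk_smul r x
            rw [hrx]
            exact S.smul_mem r hx }
      left_inv := fun S => rfl
      right_inv := fun S => rfl
      map_rel_iff' := Iff.rfl }
  exact IsSemisimpleModule.mk (toComplementedLattice := e.complementedLattice)

lemma aux_ss_ring : IsSemisimpleRing (k ⧸ nilradical k) := by
  letI := IsArtinianRing.fieldOfSubtypeIsMaximal (R := k)
  haveI : Finite (MaximalSpectrum k) := inferInstance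
  exact (IsArtinianRing.quotNilradicalEquivPi k).symm.isSemisimpleRing

lemma aux_isNoetherian_of_isArtinian (M : Type u) [AddCommGroup M] [Module k M]
    [IsArtinian k M] : IsNoetherian k M := by
  obtain ⟨n, hn⟩ := IsArtinianRing.isNilpotent_jacobson_bot (R := k)
  have hle : nilradical k ≤ Ideal.jacobson ⊥ :=
    le_sInf fun J hJ => nilradical_le_prime J (H := hJ.2.isPrime)
  have hnil : nilradical k ^ n = ⊥ := by
    have h2 : nilradical k ^ n ≤ Ideal.jacobson ⊥ ^ n := pow_le_pow_left' hle n
    rw [hn] at h2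
    exact le_bot_iff.mp (by simpa using h2)
  suffices H : ∀ (i : ℕ) (T : Type u) (_ : AddCommGroup T) (_ : Module k T)
      (_ : IsArtinian k T),
      (nilradical k ^ i) • (⊤ : Submodule k T) = ⊥ → IsNoetherian k T by
    exact H n M ‹_› ‹_› ‹_› (by rw [hnil, Submodule.bot_smul])
  intro i
  induction i with
  | zero =>
    intro T _ _ _ h
    rw [pow_zero, Ideal.one_eq_top, Submodule.top_smul] at h
    haveI : Subsingleton T := by
      refine subsingleton_of_forall_eq 0 fun x => ?_
      have hx : x ∈ (⊤ : Submodule k T) := trivial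
      rw [h] at hx
      simpa using hx
    infer_instance
  | succ i ih =>
    intro T _ _ _ h
    set P : Submodule k T := (nilradical k ^ i) • ⊤ with hP
    have hJP : nilradical k • P = ⊥ := by
      rw [hP, ← Submodule.smul_assoc, Ideal.smul_eq_mul, ← pow_succ', h]
    rw [isNoetherian_iff_submodule_quotient P]
    constructor
    · have htor : Module.IsTorsionBySet k ↥P (nilradical k) := by
        intro x r
        have hx : (r : k) • (x : T) ∈ nilradical k • P :=
          Submodule.smul_mem_smul r.2 x.2
        rw [hJP] at hx
        exact Subtype.ext (by simpa using hx)
      haveI := aux_ss_ring (k := k)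
      haveI : IsSemisimpleModule k ↥P := aux_semisimple_of_torsion htor
      have htfae := (IsSemisimpleModule.finite_tfae (R := k) (M := ↥P)).out 1 2
      exact htfae.mpr inferInstance
    · refine ih (T ⧸ P) inferInstance inferInstance inferInstance ?_
      have hmap := Submodule.map_smul'' (nilradical k ^ i) (⊤ : Submodule k T) P.mkQ
      rw [Submodule.map_top, Submodule.range_mkQ] at hmap
      rw [← hmap, ← hP]
      rw [← le_bot_iff]
      rintro x ⟨y, hy, rfl⟩
      simpa using (Submodule.Quotient.mk_eq_zero P).mpr hy

end Hopkins

lemma aux_chain (k : Type u) [CommRing k] [IsArtinianRing k]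
    (Λ : Type u) [Ring Λ] [Algebra k Λ] [Module.Finite k Λ]
    (M : Type u) [AddCommGroup M] [Module Λ M] [Module.Finite Λ M] :
    IsArtinian Λ M ∧ IsNoetherian Λ M := by
  letI : Module k M := Module.compHom M (algebraMap k Λ)
  haveI : IsScalarTower k Λ M := ⟨fun x s m => by
    show (x • s) • m = (algebraMap k Λ x) • (s • m)
    rw [Algebra.smul_def, mul_smul]⟩
  haveI : Module.Finite k M := Module.Finite.trans Λ M
  haveI hA : IsArtinian k M := inferInstance
  haveI hN : IsNoetherian k M := aux_isNoetherian_of_isArtinian M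
  exact ⟨isArtinian_of_tower k hA, isNoetherian_of_tower k hN⟩

section Corner

variable {Λ : Type u} [Ring Λ]

lemma aux_injective_of_retract {K I : Type u} [AddCommGroup K] [Module Λ K]
    [AddCommGroup I] [Module Λ I] (i : K →ₗ[Λ] I) (ρ : I →ₗ[Λ] K)
    (h : ρ ∘ₗ i = LinearMap.id) (hI : Module.Injective Λ I) :
    Module.Injective Λ K := by
  constructor
  intro X Y _ _ _ _ m hm g
  obtain ⟨h', hh'⟩ := hI.out m hm (i ∘ₗ g)
  refine ⟨ρ ∘ₗ h', fun x => ?_⟩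
  have h2 : ρ (h' (m x)) = ρ (i (g x)) := congrArg ρ (hh' x)
  have h3 : ρ (i (g x)) = g x := LinearMap.congr_fun h (g x)
  simpa using h2.trans h3

lemma aux_split {B M B' M' : Type u} [AddCommGroup B] [Module Λ B]
    [AddCommGroup M] [Module Λ M] [AddCommGroup B'] [Module Λ B']
    [AddCommGroup M'] [Module Λ M'] (T : B × M →ₗ[Λ] B' × M') (y : B) (z : M) :
    T (y, z) = ((LinearMap.fst Λ B' M' ∘ₗ T ∘ₗ LinearMap.inl Λ B M) y
        + (LinearMap.fst Λ B' M' ∘ₗ T ∘ₗ LinearMap.inr Λ B M) z,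
      (LinearMap.snd Λ B' M' ∘ₗ T ∘ₗ LinearMap.inl Λ B M) y
        + (LinearMap.snd Λ B' M' ∘ₗ T ∘ₗ LinearMap.inr Λ B M) z) := by
  have h : (y, z) = ((y, 0) : B × M) + (0, z) := by simp
  rw [h, map_add]
  simp [LinearMap.comp_apply, Prod.ext_iff]

lemma aux_bij_of_factors {B : Type u} [AddCommGroup B] [Module Λ B]
    [IsArtinian Λ B] [IsNoetherian Λ B]
    (hB : ∀ N : Submodule Λ B, (∃ N' : Submodule Λ B, IsCompl N N') →
      Module.Injective Λ ↥N → N = ⊥)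
    (c : B →ₗ[Λ] B)
    (hc : FactorsThroughInjective Λ (LinearMap.id - c)) : Function.Bijective c := by
  obtain ⟨I, _, _, hI, p, q, hpq⟩ := hc
  obtain ⟨N, hN⟩ := Filter.eventually_atTop.mp c.eventually_isCompl_ker_pow_range_pow
  have hcompl : IsCompl (LinearMap.ker (c ^ (N + 1))) (LinearMap.range (c ^ (N + 1))) :=
    hN (N + 1) (Nat.le_succ N)
  set n := N + 1 with hn
  set K := LinearMap.ker (c ^ n) with hK
  have hrest : ∀ x ∈ K, (LinearMap.id - c : B →ₗ[Λ] B) x ∈ K := by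
    intro x hx
    have hx' : (c ^ n) x = 0 := hx
    have hcc : (c ^ n) (c x) = c ((c ^ n) x) := by
      rw [← Module.End.mul_apply, ← pow_succ, pow_succ', Module.End.mul_apply]
    show (c ^ n) ((LinearMap.id - c : B →ₗ[Λ] B) x) = 0
    rw [LinearMap.sub_apply, LinearMap.id_apply, map_sub, hx', hcc, hx', map_zero, sub_zero]
  set r : ↥K →ₗ[Λ] ↥K := (LinearMap.id - c).restrict hrest with hr
  have hrinj : Function.Injective r := by
    rw [← LinearMap.ker_eq_bot]
    refine (Submodule.eq_bot_iff _).mpr fun x hx => ?_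
    have hx0 : (x : B) - c x = 0 := by
      have := congrArg Subtype.val hx
      simpa [hr, LinearMap.restrict_apply] using this
    have hcx : c (x : B) = x := by
      have := sub_eq_zero.mp hx0
      exact this.symm
    have hfix : ∀ m : ℕ, (c ^ m) (x : B) = x := by
      intro m
      induction m with
      | zero => simp
      | succ m ihm => rw [pow_succ', Module.End.mul_apply, ihm, hcx]
    have hxK : (c ^ n) (x : B) = 0 := x.2
    have : (x : B) = 0 := by rw [← hfix n, hxK]
    exact Subtype.ext this
  have hrbij := IsArtinian.bijective_of_injective_endomorphism r hrinj
  set re := LinearEquiv.ofBijective r hrbij with hre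
  set π := Submodule.projectionOnto K (LinearMap.range (c ^ n)) hcompl with hπ
  set ρ : I →ₗ[Λ] ↥K := (re.symm : ↥K →ₗ[Λ] ↥K) ∘ₗ π ∘ₗ q with hρ
  set i : ↥K →ₗ[Λ] I := p ∘ₗ K.subtype with hi
  have hretr : ρ ∘ₗ i = LinearMap.id := by
    ext x
    have h1 : q (p (x : B)) = (x : B) - c (x : B) := by
      have := LinearMap.congr_fun hpq (x : B)
      simpa using this.symm
    have h2 : π (q (p (x : B))) = r x := by
      rw [h1]
      have hmem : (x : B) - c (x : B) ∈ K := hrest x x.2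
      have : ((x : B) - c (x : B)) = ((⟨(x : B) - c (x : B), hmem⟩ : ↥K) : B) := rfl
      rw [this, Submodule.projectionOnto_apply_left hcompl]
      apply Subtype.ext
      simp [hr, LinearMap.restrict_apply]
    have h3 : re.symm (π (q (p (x : B)))) = x := by
      rw [h2]; exact re.symm_apply_apply x
    exact congrArg Subtype.val h3
  have hKinj : Module.Injective Λ ↥K := aux_injective_of_retract i ρ hretr hI
  have hK0 : K = ⊥ := hB K ⟨_, hcompl⟩ hKinj
  have hcinj : Function.Injective c := by
    rw [← LinearMap.ker_eq_bot, eq_bot_iff]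
    intro x hx
    have hx0 : c x = 0 := hx
    have hxK : x ∈ K := by
      show (c ^ n) x = 0
      rw [hn, pow_succ, Module.End.mul_apply, hx0, map_zero]
    rw [hK0] at hxK
    exact hxK
  exact IsArtinian.bijective_of_injective_endomorphism c hcinj

end Corner

lemma aux_chi_bijective {Λ A B M : Type u} [Ring Λ]
    [AddCommGroup A] [Module Λ A] [AddCommGroup B] [Module Λ B]
    [AddCommGroup M] [Module Λ M]
    [IsArtinian Λ B] [IsNoetherian Λ B] [IsArtinian Λ M]
    (hB : ∀ N : Submodule Λ B, (∃ N' : Submodule Λ B, IsCompl N N') →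
      Module.Injective Λ ↥N → N = ⊥)
    (f : A →ₗ[Λ] B) (e : A →ₗ[Λ] M)
    (hess : ∀ N : Submodule Λ M, N ≠ ⊥ → N ⊓ (LinearMap.ker f).map e ≠ ⊥)
    (χ : B × M →ₗ[Λ] B × M) (hχ : ∀ x : A, χ (f x, e x) = (f x, e x))
    (hcorner : FactorsThroughInjective Λ
      (LinearMap.id - LinearMap.fst Λ B M ∘ₗ χ ∘ₗ LinearMap.inl Λ B M)) :
    Function.Bijective χ := by
  set c := LinearMap.fst Λ B M ∘ₗ χ ∘ₗ LinearMap.inl Λ B M with hcdef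
  set u := LinearMap.fst Λ B M ∘ₗ χ ∘ₗ LinearMap.inr Λ B M with hudef
  set v := LinearMap.snd Λ B M ∘ₗ χ ∘ₗ LinearMap.inl Λ B M with hvdef
  set w := LinearMap.snd Λ B M ∘ₗ χ ∘ₗ LinearMap.inr Λ B M with hwdef
  have hc : Function.Bijective c := aux_bij_of_factors hB c hcorner
  set ce := LinearEquiv.ofBijective c hc with hce
  have hsplit : ∀ (y : B) (z : M), χ (y, z) = (c y + u z, v y + w z) := by
    intro y z
    rw [aux_split χ y z]
  set s : M →ₗ[Λ] M := w - v ∘ₗ (ce.symm : B →ₗ[Λ] B) ∘ₗ u with hsdef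
  have hker : ∀ x ∈ LinearMap.ker f, u (e x) = 0 ∧ w (e x) = e x := by
    intro x hx
    have hfx : f x = 0 := hx
    have h1 := hχ x
    rw [hfx, hsplit 0 (e x)] at h1
    simp only [map_zero, zero_add] at h1
    exact ⟨congrArg Prod.fst h1, congrArg Prod.snd h1⟩
  have hsinj : Function.Injective s := by
    rw [← LinearMap.ker_eq_bot]
    by_contra hne
    obtain ⟨z, hz, hz0⟩ := (Submodule.ne_bot_iff _).mp (hess _ hne)
    obtain ⟨hzs, hzm⟩ := Submodule.mem_inf.mp hz
    obtain ⟨x, hxf, rfl⟩ := hzm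
    obtain ⟨hu, hw⟩ := hker x hxf
    have hs : s (e x) = e x := by
      rw [hsdef]
      simp [LinearMap.sub_apply, LinearMap.comp_apply, hu, hw]
    rw [LinearMap.mem_ker, hs] at hzs
    exact hz0 hzs
  have hinj : Function.Injective χ := by
    rw [← LinearMap.ker_eq_bot]
    refine (Submodule.eq_bot_iff _).mpr ?_
    rintro ⟨y, z⟩ hx
    rw [LinearMap.mem_ker, hsplit y z, Prod.mk_eq_zero] at hx
    obtain ⟨h1, h2⟩ := hx
    have hy : y = -(ce.symm (u z)) := by
      apply hc.1
      have hcs : c (ce.symm (u z)) = u z := ce.apply_symm_apply (u z)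
      rw [map_neg, hcs]
      exact eq_neg_of_add_eq_zero_left h1
    have hz : s z = 0 := by
      rw [hsdef]
      have : v (ce.symm (u z)) = -(v y) := by rw [hy, map_neg, neg_neg]
      simp only [LinearMap.sub_apply, LinearMap.comp_apply, LinearEquiv.coe_coe, this]
      rw [sub_neg_eq_add, add_comm]
      exact h2
    have z0 : z = 0 := hsinj (by rw [hz, map_zero])
    have y0 : y = 0 := by rw [hy, z0, map_zero, map_zero, neg_zero]
    rw [y0, z0]
    rfl
  exact IsArtinian.bijective_of_injective_endomorphism χ hinj
lemma aux_mimo_mono {Λ A B M : Type u} [Ring Λ] [AddCommGroup A] [Module Λ A]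
    [AddCommGroup B] [Module Λ B] [AddCommGroup M] [Module Λ M]
    (f : A →ₗ[Λ] B) (env : ↥(LinearMap.ker f) →ₗ[Λ] M)
    (henv : Function.Injective env)
    (ef : A →ₗ[Λ] M) (hef : ef ∘ₗ (LinearMap.ker f).subtype = env) :
    Function.Injective (f.prod ef) := by
  rw [← LinearMap.ker_eq_bot]
  refine (Submodule.eq_bot_iff _).mpr fun x hx => ?_
  rw [LinearMap.mem_ker] at hx
  have hx' : f x = 0 ∧ ef x = 0 := by
    constructor
    · exact congrArg Prod.fst hx
    · exact congrArg Prod.snd hx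
  have hxk : x ∈ LinearMap.ker f := LinearMap.mem_ker.mpr hx'.1
  have h2 : env ⟨x, hxk⟩ = 0 := by
    rw [← hef]
    simpa using hx'.2
  have h3 : (⟨x, hxk⟩ : ↥(LinearMap.ker f)) = 0 := henv (by rw [h2, map_zero])
  exact congrArg Subtype.val h3

lemma aux_ess {Λ A B M : Type u} [Ring Λ] [AddCommGroup A] [Module Λ A]
    [AddCommGroup B] [Module Λ B] [AddCommGroup M] [Module Λ M]
    (f : A →ₗ[Λ] B) (env : ↥(LinearMap.ker f) →ₗ[Λ] M)
    (ef : A →ₗ[Λ] M) (hef : ef ∘ₗ (LinearMap.ker f).subtype = env)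
    (hess0 : ∀ N : Submodule Λ M, N ≠ ⊥ → N ⊓ LinearMap.range env ≠ ⊥) :
    ∀ N : Submodule Λ M, N ≠ ⊥ → N ⊓ (LinearMap.ker f).map ef ≠ ⊥ := by
  intro N hN
  have h : (LinearMap.ker f).map ef = LinearMap.range env := by
    rw [← hef, LinearMap.range_comp, Submodule.range_subtype]
  rw [h]
  exact hess0 N hN

/-- if `B` has no nonzero injective direct summands, then
`Mimo(f) ≅ Mimo(g)` in `S(Λ)` if and only if there are automorphisms `a` of `A` and
`b` of `B` such that `b ∘ f − g ∘ a` factors through an injective module. -/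
theorem stmt10
    (k : Type u) [CommRing k] [IsArtinianRing k]
    (Λ : Type u) [Ring Λ] [Algebra k Λ] [Module.Finite k Λ]
    (A B If Ig : Type u)
    [AddCommGroup A] [Module Λ A] [Module.Finite Λ A]
    [AddCommGroup B] [Module Λ B] [Module.Finite Λ B]
    [AddCommGroup If] [Module Λ If] [Module.Finite Λ If]
    [AddCommGroup Ig] [Module Λ Ig] [Module.Finite Λ Ig]
    (hB : ∀ N : Submodule Λ B, (∃ N' : Submodule Λ B, IsCompl N N') →
      Module.Injective Λ ↥N → N = ⊥)
    (f g : A →ₗ[Λ] B)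
    (envf : ↥(LinearMap.ker f) →ₗ[Λ] If) (henvf : IsInjectiveEnvelope Λ envf)
    (ef : A →ₗ[Λ] If) (hef : ef ∘ₗ (LinearMap.ker f).subtype = envf)
    (envg : ↥(LinearMap.ker g) →ₗ[Λ] Ig) (henvg : IsInjectiveEnvelope Λ envg)
    (eg : A →ₗ[Λ] Ig) (heg : eg ∘ₗ (LinearMap.ker g).subtype = envg) :
    (∃ (α : A ≃ₗ[Λ] A) (β : (B × If) ≃ₗ[Λ] (B × Ig)),
      (β : (B × If) →ₗ[Λ] (B × Ig)) ∘ₗ (f.prod ef) =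
        (g.prod eg) ∘ₗ (α : A →ₗ[Λ] A)) ↔
    (∃ (a : A ≃ₗ[Λ] A) (b : B ≃ₗ[Λ] B),
      FactorsThroughInjective Λ
        ((b : B →ₗ[Λ] B) ∘ₗ f - g ∘ₗ (a : A →ₗ[Λ] A))) := by
  obtain ⟨artB, noethB⟩ := aux_chain k Λ B
  obtain ⟨artIf, -⟩ := aux_chain k Λ If
  obtain ⟨artIg, -⟩ := aux_chain k Λ Ig
  haveI := artB; haveI := noethB; haveI := artIf; haveI := artIg
  have hmf : Function.Injective (f.prod ef) := aux_mimo_mono f envf henvf.2.1 ef hef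
  have hmg : Function.Injective (g.prod eg) := aux_mimo_mono g envg henvg.2.1 eg heg
  have hessf := aux_ess f envf ef hef henvf.2.2
  have hessg := aux_ess g envg eg heg henvg.2.2
  constructor
  · rintro ⟨α, β, hβ⟩
    set b := LinearMap.fst Λ B Ig ∘ₗ (β : B × If →ₗ[Λ] B × Ig) ∘ₗ LinearMap.inl Λ B If with hb
    set uu := LinearMap.fst Λ B Ig ∘ₗ (β : B × If →ₗ[Λ] B × Ig) ∘ₗ LinearMap.inr Λ B If with huu
    set vv := LinearMap.snd Λ B Ig ∘ₗ (β : B × If →ₗ[Λ] B × Ig) ∘ₗ LinearMap.inl Λ B If with hvv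
    set ww := LinearMap.snd Λ B Ig ∘ₗ (β : B × If →ₗ[Λ] B × Ig) ∘ₗ LinearMap.inr Λ B If with hww
    set b' := LinearMap.fst Λ B If ∘ₗ (β.symm : B × Ig →ₗ[Λ] B × If) ∘ₗ LinearMap.inl Λ B Ig with hb'
    set u' := LinearMap.fst Λ B If ∘ₗ (β.symm : B × Ig →ₗ[Λ] B × If) ∘ₗ LinearMap.inr Λ B Ig with hu'
    set v' := LinearMap.snd Λ B If ∘ₗ (β.symm : B × Ig →ₗ[Λ] B × If) ∘ₗ LinearMap.inl Λ B Ig with hv'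
    set w' := LinearMap.snd Λ B If ∘ₗ (β.symm : B × Ig →ₗ[Λ] B × If) ∘ₗ LinearMap.inr Λ B Ig with hw'
    have hsβ : ∀ (y : B) (z : If), β (y, z) = (b y + uu z, vv y + ww z) := by
      intro y z
      exact aux_split (β : B × If →ₗ[Λ] B × Ig) y z
    have hsβ' : ∀ (y : B) (z : Ig), β.symm (y, z) = (b' y + u' z, v' y + w' z) := by
      intro y z
      exact aux_split (β.symm : B × Ig →ₗ[Λ] B × If) y z
    have hfac1 : FactorsThroughInjective Λ (LinearMap.id - b' ∘ₗ b) := by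
      refine ⟨Ig, inferInstance, inferInstance, henvg.1, vv, u', ?_⟩
      ext y
      have h1 : β ((y, 0) : B × If) = (b y, vv y) := by
        rw [hsβ y 0, map_zero, map_zero, add_zero, add_zero]
      have h0 : β.symm (b y, vv y) = ((y, 0) : B × If) := by
        rw [← h1]
        exact β.symm_apply_apply _
      rw [hsβ' (b y) (vv y)] at h0
      have h2 : b' (b y) + u' (vv y) = y := congrArg Prod.fst h0
      show y - b' (b y) = u' (vv y)
      exact (eq_sub_of_add_eq' h2).symm
    have hfac2 : FactorsThroughInjective Λ (LinearMap.id - b ∘ₗ b') := by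
      refine ⟨If, inferInstance, inferInstance, henvf.1, v', uu, ?_⟩
      ext y
      have h1 : β.symm ((y, 0) : B × Ig) = (b' y, v' y) := by
        rw [hsβ' y 0, map_zero, map_zero, add_zero, add_zero]
      have h0 : β (b' y, v' y) = ((y, 0) : B × Ig) := by
        rw [← h1]
        exact β.apply_symm_apply _
      rw [hsβ (b' y) (v' y)] at h0
      have h2 : b (b' y) + uu (v' y) = y := congrArg Prod.fst h0
      show y - b (b' y) = uu (v' y)
      exact (eq_sub_of_add_eq' h2).symm
    have hbij1 : Function.Bijective (b' ∘ₗ b) := aux_bij_of_factors hB _ hfac1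
    have hbij2 : Function.Bijective (b ∘ₗ b') := aux_bij_of_factors hB _ hfac2
    have hbinj : Function.Injective b := fun x y hxy => hbij1.1 (by
      show b' (b x) = b' (b y)
      rw [hxy])
    have hbsurj : Function.Surjective b := fun z => by
      obtain ⟨t, ht⟩ := hbij2.2 z
      exact ⟨b' t, ht⟩
    refine ⟨α, LinearEquiv.ofBijective b ⟨hbinj, hbsurj⟩,
      If, inferInstance, inferInstance, henvf.1, ef, -uu, ?_⟩
    ext x
    have h2 : β ((f x, ef x) : B × If) = (g (α x), eg (α x)) := LinearMap.congr_fun hβ x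
    rw [hsβ (f x) (ef x)] at h2
    have h3 : b (f x) + uu (ef x) = g (α x) := congrArg Prod.fst h2
    show b (f x) - g (α x) = -(uu (ef x))
    rw [← h3]
    abel
  · rintro ⟨a, b, I, iAG, iMod, hI, p, q, hqp⟩
    obtain ⟨P, hP⟩ := hI.out (f.prod ef) hmf p
    obtain ⟨φ₂, hφ₂⟩ := henvg.1.out (f.prod ef) hmf (eg ∘ₗ (a : A →ₗ[Λ] A))
    obtain ⟨P', hP'⟩ := hI.out (g.prod eg) hmg (p ∘ₗ (a.symm : A →ₗ[Λ] A))
    obtain ⟨ψ₂, hψ₂⟩ := henvf.1.out (g.prod eg) hmg (ef ∘ₗ (a.symm : A →ₗ[Λ] A))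
    set φ₁ : B × If →ₗ[Λ] B := (b : B →ₗ[Λ] B) ∘ₗ LinearMap.fst Λ B If - q ∘ₗ P with hφ₁
    set φ : B × If →ₗ[Λ] B × Ig := φ₁.prod φ₂ with hφ
    set ψ₁ : B × Ig →ₗ[Λ] B := (b.symm : B →ₗ[Λ] B) ∘ₗ LinearMap.fst Λ B Ig
        + (b.symm : B →ₗ[Λ] B) ∘ₗ q ∘ₗ P' with hψ₁
    set ψ : B × Ig →ₗ[Λ] B × If := ψ₁.prod ψ₂ with hψ
    have hφm : ∀ x : A, φ ((f.prod ef) x) = (g.prod eg) (a x) := by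
      intro x
      have hqpx : (b : B →ₗ[Λ] B) (f x) - g (a x) = q (p x) := by
        have := LinearMap.congr_fun hqp x
        simpa using this
      have h1 : φ₁ ((f.prod ef) x) = g (a x) := by
        show (b : B →ₗ[Λ] B) (f x) - q (P ((f.prod ef) x)) = g (a x)
        rw [hP x, ← hqpx]
        abel
      have h2 : φ₂ ((f.prod ef) x) = eg (a x) := by
        have := hφ₂ x
        simpa using this
      show (φ₁ ((f.prod ef) x), φ₂ ((f.prod ef) x)) = (g (a x), eg (a x))
      rw [h1, h2]
    have hψm : ∀ x : A, ψ ((g.prod eg) x) = (f.prod ef) (a.symm x) := by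
      intro x
      have hqpx : (b : B →ₗ[Λ] B) (f (a.symm x)) - g (a (a.symm x)) = q (p (a.symm x)) := by
        have := LinearMap.congr_fun hqp (a.symm x)
        simpa using this
      rw [a.apply_symm_apply] at hqpx
      have h1 : ψ₁ ((g.prod eg) x) = f (a.symm x) := by
        show b.symm (g x) + b.symm (q (P' ((g.prod eg) x))) = f (a.symm x)
        have hPx : q (P' ((g.prod eg) x)) = q (p (a.symm x)) := by
          rw [hP' x]
          simp
        rw [hPx, ← hqpx, ← map_add]
        have h4 : g x + ((b : B →ₗ[Λ] B) (f (a.symm x)) - g x)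
            = (b : B →ₗ[Λ] B) (f (a.symm x)) := by abel
        rw [h4]
        exact b.symm_apply_apply _
      have h2 : ψ₂ ((g.prod eg) x) = ef (a.symm x) := by
        have := hψ₂ x
        simpa using this
      show (ψ₁ ((g.prod eg) x), ψ₂ ((g.prod eg) x)) = (f (a.symm x), ef (a.symm x))
      rw [h1, h2]
    have hχm : ∀ x : A, (ψ ∘ₗ φ) ((f.prod ef) x) = (f.prod ef) x := by
      intro x
      show ψ (φ ((f.prod ef) x)) = (f.prod ef) x
      rw [hφm x, hψm (a x), a.symm_apply_apply]
    have hχ'm : ∀ x : A, (φ ∘ₗ ψ) ((g.prod eg) x) = (g.prod eg) x := by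
      intro x
      show φ (ψ ((g.prod eg) x)) = (g.prod eg) x
      rw [hψm x, hφm (a.symm x), a.apply_symm_apply]
    have hcornerχ : FactorsThroughInjective Λ
        (LinearMap.id - LinearMap.fst Λ B If ∘ₗ (ψ ∘ₗ φ) ∘ₗ LinearMap.inl Λ B If) := by
      refine ⟨I, iAG, iMod, hI,
        P ∘ₗ LinearMap.inl Λ B If - P' ∘ₗ φ ∘ₗ LinearMap.inl Λ B If,
        (b.symm : B →ₗ[Λ] B) ∘ₗ q, ?_⟩
      ext y
      simp only [LinearMap.sub_apply, LinearMap.comp_apply, LinearMap.id_apply,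
        LinearMap.fst_apply, LinearMap.inl_apply, LinearEquiv.coe_coe, map_sub,
        hψ, hφ, hψ₁, hφ₁, LinearMap.prod_apply, Function.prod, LinearMap.add_apply,
        LinearEquiv.symm_apply_apply]
      abel
    have hcornerχ' : FactorsThroughInjective Λ
        (LinearMap.id - LinearMap.fst Λ B Ig ∘ₗ (φ ∘ₗ ψ) ∘ₗ LinearMap.inl Λ B Ig) := by
      refine ⟨I, iAG, iMod, hI,
        P ∘ₗ ψ ∘ₗ LinearMap.inl Λ B Ig - P' ∘ₗ LinearMap.inl Λ B Ig, q, ?_⟩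
      ext y
      simp only [LinearMap.sub_apply, LinearMap.comp_apply, LinearMap.id_apply,
        LinearMap.fst_apply, LinearMap.inl_apply, LinearEquiv.coe_coe, map_sub,
        hψ, hφ, hψ₁, hφ₁, LinearMap.prod_apply, Function.prod, LinearMap.add_apply,
        map_add, LinearEquiv.apply_symm_apply]
      abel
    have hbijχ : Function.Bijective (ψ ∘ₗ φ) :=
      aux_chi_bijective hB f ef hessf (ψ ∘ₗ φ) hχm hcornerχ
    have hbijχ' : Function.Bijective (φ ∘ₗ ψ) :=
      aux_chi_bijective hB g eg hessg (φ ∘ₗ ψ) hχ'm hcornerχ'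
    have hφinj : Function.Injective φ := fun x y hxy => hbijχ.1 (by
      show ψ (φ x) = ψ (φ y)
      rw [hxy])
    have hφsurj : Function.Surjective φ := fun z => by
      obtain ⟨t, ht⟩ := hbijχ'.2 z
      exact ⟨ψ t, ht⟩
    refine ⟨a, LinearEquiv.ofBijective φ ⟨hφinj, hφsurj⟩, LinearMap.ext fun x => ?_⟩
    show φ ((f.prod ef) x) = (g.prod eg) (a x)
    exact hφm x
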